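/- Suppose ξ is a unit-speed curve in ℝ⁴ whose curvatures κ, k, r−κ are all constant (a w-curve), with κ > 0, k > 0. Then the Frenet frame of the involute φ(s) = ξ(s) + (c−s)T(s) (for c − s > 0) satisfies: T_φ = N_ξ, N_φ = (−κ T_ξ + k B_ξ)/√(κ²+k²), B_φ = ±E_ξ, E_φ = ±(k T_ξ + κ B_ξ)/√(κ²+k²). -/

import Mathlib

open scoped RealInnerProductSpace

theorem norm_comb' {V : Type*} [NormedAddCommGroup V] [InnerProductSpace ℝ V]
    (T B : V) (a b : ℝ) (hT : ‖T‖ = 1) (hB : ‖B‖ = 1)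
    (hTB : ⟪T, B⟫ = (0:ℝ)) : ‖a • T + b • B‖ = Real.sqrt (a^2 + b^2) := by
  have h : ‖a • T + b • B‖^2 = a^2 + b^2 := by
    rw [norm_add_sq_real, real_inner_smul_left, real_inner_smul_right, hTB,
      norm_smul, norm_smul, hT, hB]
    simp [mul_pow, sq_abs]
  rw [← Real.sqrt_sq (norm_nonneg _), h]

theorem pos_smul_eq' {V : Type*} [NormedAddCommGroup V] [InnerProductSpace ℝ V]
    {u v : V} {a : ℝ} (h : a • u = v) (hu : ‖u‖ = 1) (ha : 0 < a) :
    a = ‖v‖ ∧ u = ‖v‖⁻¹ • v := by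
  have hn : ‖v‖ = a := by
    rw [← h, norm_smul, hu, mul_one, Real.norm_eq_abs, abs_of_pos ha]
  refine ⟨hn.symm, ?_⟩
  rw [hn, ← h, smul_smul, inv_mul_cancel₀ ha.ne', one_smul]

theorem sign_smul_eq' {V : Type*} [NormedAddCommGroup V] [InnerProductSpace ℝ V]
    {u w : V} {a b q : ℝ} (h : a • u = b • w) (hu : ‖u‖ = 1) (hw : ‖w‖ = q)
    (hq : 0 < q) (hb : b ≠ 0) : u = q⁻¹ • w ∨ u = -(q⁻¹ • w) := by
  have ha : a ≠ 0 := by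
    rintro rfl
    apply hb
    have : b • w = 0 := by rw [← h, zero_smul]
    have hw0 : w ≠ 0 := by intro h0; rw [h0, norm_zero] at hw; exact hq.ne hw
    exact (smul_eq_zero.1 this).resolve_right hw0
  have hu' : u = (b / a) • w := by
    rw [div_eq_inv_mul, ← smul_smul, ← h, smul_smul, inv_mul_cancel₀ ha, one_smul]
  have habs : |b / a| = q⁻¹ := by
    have : ‖u‖ = |b / a| * q := by rw [hu', norm_smul, hw]; rfl
    rw [hu] at this
    field_simp [hq.ne'] at this ⊢
    linarith
  rcases abs_eq (by positivity : (0:ℝ) ≤ q⁻¹) |>.1 habs with h1 | h1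
  · left; rw [hu', h1]
  · right; rw [hu', h1, neg_smul]

/-- If `ξ` is a unit-speed curve in `ℝ⁴` with constant curvatures `κ > 0`,
`k > 0`, `r - κ` (a w-curve), then the Frenet frame of its involute
`φ(s) = ξ(s) + (c-s)T(s)` (for `s < c`) satisfies `T_φ = N`,
`N_φ = (-κT + kB)/√(κ²+k²)`, `B_φ = ±E`, `E_φ = ±(kT + κB)/√(κ²+k²)`. -/
theorem involute_frame_of_w_curve (ξ T N B E Tφ Nφ Bφ Eφ : ℝ → EuclideanSpace ℝ (Fin 4))
    (κ k rκ : ℝ) (κφ kφ rκφ : ℝ → ℝ) (c : ℝ)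
    (hξ : ∀ s, HasDerivAt ξ (T s) s)
    (hT : ∀ s, HasDerivAt T (κ • N s) s)
    (hN : ∀ s, HasDerivAt N (-κ • T s + k • B s) s)
    (hB : ∀ s, HasDerivAt B (-k • N s + rκ • E s) s)
    (hE : ∀ s, HasDerivAt E (-rκ • B s) s)
    (hκ : 0 < κ) (hk : 0 < k)
    (hfr : ∀ s, ‖T s‖ = 1 ∧ ‖N s‖ = 1 ∧ ‖B s‖ = 1 ∧ ‖E s‖ = 1 ∧
      ⟪T s, N s⟫ = (0 : ℝ) ∧ ⟪T s, B s⟫ = (0 : ℝ) ∧ ⟪T s, E s⟫ = (0 : ℝ) ∧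
      ⟪N s, B s⟫ = (0 : ℝ) ∧ ⟪N s, E s⟫ = (0 : ℝ) ∧ ⟪B s, E s⟫ = (0 : ℝ))
    -- the Frenet frame of the involute `φ`
    (hTφ : ∀ s ∈ Set.Iio c, Tφ s =
      ‖deriv (fun u => ξ u + (c - u) • T u) s‖⁻¹ • deriv (fun u => ξ u + (c - u) • T u) s)
    (hTφ' : ∀ s ∈ Set.Iio c, HasDerivAt Tφ
      ((‖deriv (fun u => ξ u + (c - u) • T u) s‖ * κφ s) • Nφ s) s)
    (hNφ' : ∀ s ∈ Set.Iio c, HasDerivAt Nφ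
      (‖deriv (fun u => ξ u + (c - u) • T u) s‖ • (-κφ s • Tφ s + kφ s • Bφ s)) s)
    (hBφ' : ∀ s ∈ Set.Iio c, HasDerivAt Bφ
      (‖deriv (fun u => ξ u + (c - u) • T u) s‖ • (-kφ s • Nφ s + rκφ s • Eφ s)) s)
    (hEφ' : ∀ s ∈ Set.Iio c, HasDerivAt Eφ
      (‖deriv (fun u => ξ u + (c - u) • T u) s‖ • (-rκφ s • Bφ s)) s)
    (hκφ : ∀ s ∈ Set.Iio c, 0 < κφ s) (hkφ : ∀ s ∈ Set.Iio c, 0 < kφ s)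
    (hfrφ : ∀ s ∈ Set.Iio c, ‖Tφ s‖ = 1 ∧ ‖Nφ s‖ = 1 ∧ ‖Bφ s‖ = 1 ∧ ‖Eφ s‖ = 1 ∧
      ⟪Tφ s, Nφ s⟫ = (0 : ℝ) ∧ ⟪Tφ s, Bφ s⟫ = (0 : ℝ) ∧ ⟪Tφ s, Eφ s⟫ = (0 : ℝ) ∧
      ⟪Nφ s, Bφ s⟫ = (0 : ℝ) ∧ ⟪Nφ s, Eφ s⟫ = (0 : ℝ) ∧ ⟪Bφ s, Eφ s⟫ = (0 : ℝ)) :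
    ∀ s ∈ Set.Iio c,
      Tφ s = N s ∧
      Nφ s = (Real.sqrt (κ ^ 2 + k ^ 2))⁻¹ • (-κ • T s + k • B s) ∧
      (Bφ s = E s ∨ Bφ s = -E s) ∧
      (Eφ s = (Real.sqrt (κ ^ 2 + k ^ 2))⁻¹ • (k • T s + κ • B s) ∨
       Eφ s = -((Real.sqrt (κ ^ 2 + k ^ 2))⁻¹ • (k • T s + κ • B s))) := by
  set q : ℝ := Real.sqrt (κ ^ 2 + k ^ 2) with hqdef
  have hq2 : q ^ 2 = κ ^ 2 + k ^ 2 := Real.sq_sqrt (by positivity)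
  have hqpos : 0 < q := Real.sqrt_pos.2 (by positivity)
  clear_value q
  -- derivative of the involute
  have hφ' : ∀ s, HasDerivAt (fun u => ξ u + (c - u) • T u) (((c - s) * κ) • N s) s := by
    intro s
    have h3 := (hξ s).add
      (HasDerivAt.smul ((hasDerivAt_const s c).sub (hasDerivAt_id s)) (hT s))
    refine h3.congr_deriv ?_
    simp only [Pi.sub_apply, id_eq]
    module
  have hdφ : ∀ s, deriv (fun u => ξ u + (c - u) • T u) s = ((c - s) * κ) • N s :=
    fun s => (hφ' s).deriv
  have hpos : ∀ s ∈ Set.Iio c, 0 < (c - s) * κ :=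
    fun s hs => mul_pos (sub_pos.2 hs) hκ
  have hρ : ∀ s ∈ Set.Iio c, ‖deriv (fun u => ξ u + (c - u) • T u) s‖ = (c - s) * κ := by
    intro s hs
    rw [hdφ s, norm_smul, (hfr s).2.1, mul_one, Real.norm_eq_abs, abs_of_pos (hpos s hs)]
  have hρpos : ∀ s ∈ Set.Iio c, 0 < ‖deriv (fun u => ξ u + (c - u) • T u) s‖ := by
    intro s hs; rw [hρ s hs]; exact hpos s hs
  -- Step 1 : Tφ = N
  have key1 : ∀ s ∈ Set.Iio c, Tφ s = N s := by
    intro s hs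
    obtain ⟨-, h2⟩ := pos_smul_eq' (hdφ s).symm (hfr s).2.1 (hpos s hs)
    rw [hTφ s hs, ← h2]
  -- Step 2 : Nφ = q⁻¹ • (-κ T + k B)
  have key2 : ∀ s ∈ Set.Iio c,
      ‖deriv (fun u => ξ u + (c - u) • T u) s‖ * κφ s = q ∧
      Nφ s = q⁻¹ • (-κ • T s + k • B s) := by
    intro s hs
    have hmem : Set.Iio c ∈ nhds s := isOpen_Iio.mem_nhds hs
    have heq : Tφ =ᶠ[nhds s] N := Filter.eventuallyEq_of_mem hmem (fun u hu => key1 u hu)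
    have hd1 : HasDerivAt Tφ (-κ • T s + k • B s) s := (hN s).congr_of_eventuallyEq heq
    have huniq := (hTφ' s hs).unique hd1
    have hnorm : ‖-κ • T s + k • B s‖ = q := by
      have := norm_comb' (T s) (B s) (-κ) k (hfr s).1 (hfr s).2.2.1 (hfr s).2.2.2.2.2.1
      simpa [hqdef] using this
    obtain ⟨h1, h2⟩ := pos_smul_eq' huniq (hfrφ s hs).2.1
      (mul_pos (hρpos s hs) (hκφ s hs))
    rw [hnorm] at h1 h2
    exact ⟨h1, h2⟩
  -- Step 3 : (ρ kφ) • Bφ = (q⁻¹ k rκ) • E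
  have key3 : ∀ s ∈ Set.Iio c,
      (‖deriv (fun u => ξ u + (c - u) • T u) s‖ * kφ s) • Bφ s
        = (q⁻¹ * (k * rκ)) • E s := by
    intro s hs
    have hmem : Set.Iio c ∈ nhds s := isOpen_Iio.mem_nhds hs
    have heqN : Nφ =ᶠ[nhds s] fun u => q⁻¹ • (-κ • T u + k • B u) :=
      Filter.eventuallyEq_of_mem hmem (fun u hu => (key2 u hu).2)
    have hd2 : HasDerivAt (fun u => q⁻¹ • (-κ • T u + k • B u))
        (q⁻¹ • (-κ • (κ • N s) + k • (-k • N s + rκ • E s))) s := by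
      exact ((((hT s).const_smul (-κ)).add ((hB s).const_smul k)).const_smul q⁻¹)
    have hd2' : HasDerivAt Nφ
        (q⁻¹ • (-κ • (κ • N s) + k • (-k • N s + rκ • E s))) s :=
      hd2.congr_of_eventuallyEq heqN
    have huniq := (hNφ' s hs).unique hd2'
    rw [key1 s hs] at huniq
    have hstep : (‖deriv (fun u => ξ u + (c - u) • T u) s‖ * kφ s) • Bφ s
        = q⁻¹ • (-κ • (κ • N s) + k • (-k • N s + rκ • E s))
          + (‖deriv (fun u => ξ u + (c - u) • T u) s‖ * κφ s) • N s := by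
      rw [← huniq]; module
    rw [(key2 s hs).1] at hstep
    rw [hstep]
    match_scalars
    · field_simp
      nlinarith [hq2]
    · ring
  -- rκ ≠ 0
  have hrκ : rκ ≠ 0 := by
    intro h0
    have hs0 : c - 1 ∈ Set.Iio c := by simp
    have h3 := key3 (c - 1) hs0
    rw [h0] at h3
    simp only [mul_zero, zero_smul] at h3
    have hB0 : Bφ (c - 1) = 0 :=
      (smul_eq_zero.1 h3).resolve_left (mul_pos (hρpos _ hs0) (hkφ _ hs0)).ne'
    have := (hfrφ (c - 1) hs0).2.2.1
    rw [hB0, norm_zero] at this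
    norm_num at this
  -- sign
  set σ : ℝ := if 0 < rκ then 1 else -1 with hσdef
  have hσrκ : σ * rκ = |rκ| := by
    rcases lt_or_gt_of_ne hrκ with h | h
    · rw [hσdef, if_neg (not_lt.2 h.le), abs_of_neg h]; ring
    · rw [hσdef, if_pos h, abs_of_pos h]; ring
  have hσ1 : σ = 1 ∨ σ = -1 := by
    rcases lt_or_gt_of_ne hrκ with h | h
    · right; rw [hσdef, if_neg (not_lt.2 h.le)]
    · left; rw [hσdef, if_pos h]
  have hσ0 : σ ≠ 0 := by rcases hσ1 with h | h <;> rw [h] <;> norm_num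
  clear_value σ
  -- Step 4 : Bφ = σ • E, and value of ρ kφ
  have key4 : ∀ s ∈ Set.Iio c, Bφ s = σ • E s ∧
      ‖deriv (fun u => ξ u + (c - u) • T u) s‖ * kφ s = q⁻¹ * k * |rκ| := by
    intro s hs
    obtain ⟨h1, h2⟩ := pos_smul_eq' (key3 s hs) (hfrφ s hs).2.2.1
      (mul_pos (hρpos s hs) (hkφ s hs))
    have hnorm : ‖(q⁻¹ * (k * rκ)) • E s‖ = q⁻¹ * k * |rκ| := by
      rw [norm_smul, (hfr s).2.2.2.1, mul_one, Real.norm_eq_abs, abs_mul, abs_mul,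
        abs_of_pos (by positivity : (0:ℝ) < q⁻¹), abs_of_pos hk]
      ring
    constructor
    · rw [h2, hnorm, smul_smul, ← hσrκ]
      congr 1
      rcases lt_or_gt_of_ne hrκ with h | h
      · have hσv : σ = -1 := by rw [hσdef, if_neg (not_lt.2 h.le)]
        rw [hσv]; field_simp
      · have hσv : σ = 1 := by rw [hσdef, if_pos h]
        rw [hσv]; field_simp
    · rw [h1, hnorm]
  -- Step 5 : Eφ
  intro s hs
  have hmem : Set.Iio c ∈ nhds s := isOpen_Iio.mem_nhds hs
  have heqB : Bφ =ᶠ[nhds s] fun u => σ • E u :=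
    Filter.eventuallyEq_of_mem hmem (fun u hu => (key4 u hu).1)
  have hd3 : HasDerivAt Bφ (σ • (-rκ • B s)) s :=
    ((hE s).const_smul σ).congr_of_eventuallyEq heqB
  have huniq := (hBφ' s hs).unique hd3
  rw [(key2 s hs).2] at huniq
  have hstep : (‖deriv (fun u => ξ u + (c - u) • T u) s‖ * rκφ s) • Eφ s
      = σ • (-rκ • B s)
        + (‖deriv (fun u => ξ u + (c - u) • T u) s‖ * kφ s) •
            (q⁻¹ • (-κ • T s + k • B s)) := by
    rw [← huniq]; module
  rw [(key4 s hs).2, ← hσrκ] at hstep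
  have hstep2 : (‖deriv (fun u => ξ u + (c - u) • T u) s‖ * rκφ s) • Eφ s
      = (-(σ * rκ * κ / q ^ 2)) • (k • T s + κ • B s) := by
    rw [hstep]
    match_scalars
    · field_simp
      linear_combination (-1 : ℝ) * hq2
    · field_simp
  have hwnorm : ‖k • T s + κ • B s‖ = q := by
    have := norm_comb' (T s) (B s) k κ (hfr s).1 (hfr s).2.2.1 (hfr s).2.2.2.2.2.1
    rw [this, hqdef, add_comm (k ^ 2)]
  have hb0 : -(σ * rκ * κ / q ^ 2) ≠ 0 := by
    have : σ * rκ * κ / q ^ 2 ≠ 0 := by positivity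
    simpa using this
  have hE5 := sign_smul_eq' hstep2 (hfrφ s hs).2.2.2.1 hwnorm hqpos hb0
  -- assemble
  refine ⟨key1 s hs, (key2 s hs).2, ?_, hE5⟩
  rcases hσ1 with h | h
  · left; rw [(key4 s hs).1, h, one_smul]
  · right; rw [(key4 s hs).1, h, neg_one_smul]
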